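/- Let B, C be real numbers with |B| ≤ C and C − B > 0, and set F(y) = By + C. There exists a constant c > 0 depending only on B, C such that for every C¹ function σ : [-1,1] → ℂ with σ(-1) = 0, one has ∫₋₁¹|σ(y)|²dy ≤ c·∫₋₁¹F(y)|σ'(y)|²dy. -/

import Mathlib

open MeasureTheory intervalIntegral

/-- Weighted inequality (cf. \eqref{911b} in the paper): for the affine weight
`F(y) = By + C` with `|B| ≤ C` and `C − B > 0`, there is `c > 0` depending only on `B, C`
such that every `C¹` function `σ` with `σ(-1) = 0` satisfies `∫|σ|² ≤ c·∫F|σ'|²`. -/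
theorem stmt_4 (B C : ℝ) (hBC : |B| ≤ C) (hCB : 0 < C - B) :
    ∃ c > 0, ∀ σ : ℝ → ℂ, ContDiff ℝ 1 σ → σ (-1) = 0 →
      (∫ y in (-1 : ℝ)..1, ‖σ y‖ ^ 2)
        ≤ c * ∫ y in (-1 : ℝ)..1, (B * y + C) * ‖deriv σ y‖ ^ 2 := by
  refine ⟨16 / (C - B), by positivity, ?_⟩
  intro σ hσ h0
  set f : ℝ → ℂ := deriv σ with hf
  have hdσ : Differentiable ℝ σ := hσ.differentiable one_ne_zero
  have hderiv : ∀ y, HasDerivAt σ (f y) y := fun y => (hdσ y).hasDerivAt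
  have hcf : Continuous f := hσ.continuous_deriv le_rfl
  have hcσ : Continuous σ := hσ.continuous
  -- derivative of ‖σ‖²
  have hN : ∀ y, HasDerivAt (fun y => ‖σ y‖ ^ 2) (2 * @inner ℝ ℂ _ (σ y) (f y)) y := by
    intro y
    have h1 : HasDerivAt (fun y => @inner ℝ ℂ _ (σ y) (σ y))
        (@inner ℝ ℂ _ (σ y) (f y) + @inner ℝ ℂ _ (f y) (σ y)) y :=
      (hderiv y).inner ℝ (hderiv y)
    have h2 : @inner ℝ ℂ _ (σ y) (f y) + @inner ℝ ℂ _ (f y) (σ y)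
        = 2 * @inner ℝ ℂ _ (σ y) (f y) := by
      rw [real_inner_comm (f y) (σ y)]; ring
    rw [h2] at h1
    refine h1.congr_of_eventuallyEq (Filter.Eventually.of_forall fun x => ?_)
    exact (real_inner_self_eq_norm_sq _).symm
  -- FTC for (y-1)*‖σ y‖²
  have hg : ∀ y, HasDerivAt (fun y => (y - 1) * ‖σ y‖ ^ 2)
      (‖σ y‖ ^ 2 + (y - 1) * (2 * @inner ℝ ℂ _ (σ y) (f y))) y := by
    intro y
    have := ((hasDerivAt_id y).sub_const 1).mul (hN y)
    simpa [one_mul, Pi.mul_def] using this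
  have hci : Continuous fun y => 2 * @inner ℝ ℂ _ (σ y) (f y) :=
    continuous_const.mul (hcσ.inner hcf)
  have hI1 : IntervalIntegrable (fun y => ‖σ y‖ ^ 2) volume (-1) 1 :=
    (hcσ.norm.pow 2).intervalIntegrable _ _
  have hI2 : IntervalIntegrable (fun y => (y - 1) * (2 * @inner ℝ ℂ _ (σ y) (f y)))
      volume (-1) 1 := (((continuous_id.sub continuous_const).mul hci)).intervalIntegrable _ _
  have hFTC : (∫ y in (-1 : ℝ)..1, (‖σ y‖ ^ 2 + (y - 1) * (2 * @inner ℝ ℂ _ (σ y) (f y))))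
      = 0 := by
    rw [intervalIntegral.integral_eq_sub_of_hasDerivAt (fun y _ => hg y)
      ((hI1.add hI2))]
    simp [h0]
  rw [intervalIntegral.integral_add hI1 hI2] at hFTC
  set I : ℝ := ∫ y in (-1 : ℝ)..1, ‖σ y‖ ^ 2 with hIdef
  set J : ℝ := ∫ y in (-1 : ℝ)..1, (1 - y) ^ 2 * ‖f y‖ ^ 2 with hJdef
  have hIJ2 : IntervalIntegrable (fun y => (1 - y) ^ 2 * ‖f y‖ ^ 2) volume (-1) 1 :=
    (((continuous_const.sub continuous_id).pow 2).mul (hcf.norm.pow 2)).intervalIntegrable _ _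
  -- I = ∫ (1-y)·2⟪σ,f⟫ ≤ ∫ (½‖σ‖² + 2(1-y)²‖f‖²) = I/2 + 2J
  have key : I ≤ (1 / 2) * I + 2 * J := by
    have hIeq : I = ∫ y in (-1 : ℝ)..1, -((y - 1) * (2 * @inner ℝ ℂ _ (σ y) (f y))) := by
      rw [intervalIntegral.integral_neg]; linarith [hFTC]
    have hmono : (∫ y in (-1 : ℝ)..1, -((y - 1) * (2 * @inner ℝ ℂ _ (σ y) (f y))))
        ≤ ∫ y in (-1 : ℝ)..1, ((1 / 2) * ‖σ y‖ ^ 2 + 2 * ((1 - y) ^ 2 * ‖f y‖ ^ 2)) := by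
      apply intervalIntegral.integral_mono_on (by norm_num) hI2.neg
        ((hI1.const_mul _).add (hIJ2.const_mul _))
      intro y hy
      have hy1 : -1 ≤ y := hy.1
      have hy2 : y ≤ 1 := hy.2
      have hCS : @inner ℝ ℂ _ (σ y) (f y) ≤ ‖σ y‖ * ‖f y‖ := real_inner_le_norm _ _
      simp only [Pi.neg_apply]
      nlinarith [sq_nonneg (‖σ y‖ - 2 * (1 - y) * ‖f y‖), norm_nonneg (σ y),
        norm_nonneg (f y), mul_nonneg (norm_nonneg (σ y)) (norm_nonneg (f y)),
        mul_le_mul_of_nonneg_left hCS (by linarith : (0:ℝ) ≤ 2 * (1 - y))]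
    rw [intervalIntegral.integral_add (hI1.const_mul _) (hIJ2.const_mul _),
      intervalIntegral.integral_const_mul, intervalIntegral.integral_const_mul] at hmono
    rw [← hIeq] at hmono
    linarith [hmono]
  have hI4J : I ≤ 4 * J := by linarith
  -- J ≤ (4/(C-B)) * ∫ (By+C)‖f‖²
  have hIF : IntervalIntegrable (fun y => (B * y + C) * ‖f y‖ ^ 2) volume (-1) 1 :=
    (((continuous_const.mul continuous_id).add continuous_const).mul
      (hcf.norm.pow 2)).intervalIntegrable _ _
  have hJbound : J ≤ ∫ y in (-1 : ℝ)..1, (4 / (C - B)) * ((B * y + C) * ‖f y‖ ^ 2) := by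
    apply intervalIntegral.integral_mono_on (by norm_num) hIJ2 (hIF.const_mul _)
    intro y hy
    have hy1 : -1 ≤ y := hy.1
    have hy2 : y ≤ 1 := hy.2
    have habs : -C ≤ B := neg_le_of_abs_le hBC
    have hfact : (C - B) * (1 - y) ^ 2 ≤ 4 * (B * y + C) := by
      nlinarith [mul_nonneg (by linarith : (0:ℝ) ≤ y + 1)
        (by nlinarith : (0:ℝ) ≤ 3 * C + B - (C - B) * y)]
    have hfn : (0:ℝ) ≤ ‖f y‖ ^ 2 := by positivity
    rw [div_mul_eq_mul_div, le_div_iff₀ hCB]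
    nlinarith [mul_le_mul_of_nonneg_right hfact hfn]
  rw [intervalIntegral.integral_const_mul] at hJbound
  calc I ≤ 4 * J := hI4J
    _ ≤ 4 * ((4 / (C - B)) * ∫ y in (-1:ℝ)..1, (B * y + C) * ‖f y‖ ^ 2) := by
        have h4 : (0:ℝ) ≤ 4 := by norm_num
        exact mul_le_mul_of_nonneg_left hJbound h4
    _ = (16 / (C - B)) * ∫ y in (-1:ℝ)..1, (B * y + C) * ‖f y‖ ^ 2 := by ring
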